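/- (Equivalent form of Theorem B.) The second moment of the tilted Wigner semicircle is strictly increasing in the tilt on the nonnegative half-line: for all real numbers λ₁, λ₂ with 0 ≤ λ₁ < λ₂, one has E_{λ₁}[x²] < E_{λ₂}[x²]. -/

import Mathlib

open intervalIntegral

/-- The exponentially tilted Wigner semicircle weight on `[-1,1]`. -/
noncomputable def tiltW (lam x : ℝ) : ℝ := Real.sqrt (1 - x ^ 2) * Real.exp (lam * x)

/-- The normalization constant `Z(λ)`. -/
noncomputable def tiltZ (lam : ℝ) : ℝ := ∫ x in (-1 : ℝ)..1, tiltW lam x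

/-- The mean `E_λ[f]` under the tilted semicircle measure. -/
noncomputable def tiltE (lam : ℝ) (f : ℝ → ℝ) : ℝ :=
  (tiltZ lam)⁻¹ * ∫ x in (-1 : ℝ)..1, f x * tiltW lam x

/-- The covariance `Cov_λ(f, g)` under the tilted semicircle measure. -/
noncomputable def tiltCov (lam : ℝ) (f g : ℝ → ℝ) : ℝ :=
  tiltE lam (fun x => f x * g x) - tiltE lam f * tiltE lam g

noncomputable def tiltI (lam : ℝ) : ℝ := ∫ x in (-1 : ℝ)..1, x ^ 2 * tiltW lam x

lemma tiltW_cont (lam : ℝ) : Continuous (tiltW lam) := by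
  unfold tiltW; fun_prop

lemma tiltW_nonneg (lam x : ℝ) : 0 ≤ tiltW lam x :=
  mul_nonneg (Real.sqrt_nonneg _) (Real.exp_pos _).le

lemma tiltW_pos (lam : ℝ) {x : ℝ} (h1 : -1 < x) (h2 : x < 1) : 0 < tiltW lam x := by
  apply mul_pos _ (Real.exp_pos _)
  apply Real.sqrt_pos.mpr; nlinarith

lemma tiltZ_pos (lam : ℝ) : 0 < tiltZ lam := by
  apply intervalIntegral_pos_of_pos_on ((tiltW_cont lam).intervalIntegrable _ _)
    (fun x hx => tiltW_pos lam hx.1 hx.2) (by norm_num)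

lemma intW_neg (l : ℝ) : (∫ x in (-1:ℝ)..1, tiltW l (-x)) = tiltZ l := by
  rw [intervalIntegral.integral_comp_neg]; norm_num [tiltZ]

lemma intI_neg (l : ℝ) : (∫ x in (-1:ℝ)..1, x ^ 2 * tiltW l (-x)) = tiltI l := by
  have h := intervalIntegral.integral_comp_neg (a := (-1:ℝ)) (b := 1)
    (fun x => x ^ 2 * tiltW l x)
  simp only [neg_neg, neg_pow, Even.neg_pow even_two] at h
  simpa [tiltI] using h

lemma tiltW_neg_cont (l : ℝ) : Continuous fun x : ℝ => tiltW l (-x) := by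
  unfold tiltW; fun_prop

lemma int_base (l y : ℝ) :
    (∫ x in (-1:ℝ)..1, (y ^ 2 - x ^ 2) * tiltW l x) = y ^ 2 * tiltZ l - tiltI l := by
  have h : ∀ x : ℝ, (y ^ 2 - x ^ 2) * tiltW l x
      = y ^ 2 * tiltW l x - x ^ 2 * tiltW l x := fun x => by ring
  simp_rw [h]
  rw [intervalIntegral.integral_sub (f := fun x => y ^ 2 * tiltW l x) (g := fun x => x ^ 2 * tiltW l x)
      ((continuous_const.mul (tiltW_cont l)).intervalIntegrable _ _)
      ((continuous_pow 2 |>.mul (tiltW_cont l)).intervalIntegrable _ _),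
    intervalIntegral.integral_const_mul]
  rfl

lemma int_base_neg (l y : ℝ) :
    (∫ x in (-1:ℝ)..1, (y ^ 2 - x ^ 2) * tiltW l (-x)) = y ^ 2 * tiltZ l - tiltI l := by
  have h : ∀ x : ℝ, (y ^ 2 - x ^ 2) * tiltW l (-x)
      = y ^ 2 * tiltW l (-x) - x ^ 2 * tiltW l (-x) := fun x => by ring
  simp_rw [h]
  rw [intervalIntegral.integral_sub (f := fun x => y ^ 2 * tiltW l (-x)) (g := fun x => x ^ 2 * tiltW l (-x))
      ((continuous_const.mul (tiltW_neg_cont l)).intervalIntegrable _ _)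
      ((continuous_pow 2 |>.mul (tiltW_neg_cont l)).intervalIntegrable _ _),
    intervalIntegral.integral_const_mul, intW_neg, intI_neg]

lemma outer_base (l m : ℝ) :
    (∫ y in (-1:ℝ)..1, (y ^ 2 * tiltZ l - tiltI l) * tiltW m y)
      = tiltZ l * tiltI m - tiltI l * tiltZ m := by
  have h : ∀ y : ℝ, (y ^ 2 * tiltZ l - tiltI l) * tiltW m y
      = tiltZ l * (y ^ 2 * tiltW m y) - tiltI l * tiltW m y := fun y => by ring
  simp_rw [h]
  rw [intervalIntegral.integral_sub (f := fun y => tiltZ l * (y ^ 2 * tiltW m y)) (g := fun y => tiltI l * tiltW m y)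
      ((continuous_const.mul (continuous_pow 2 |>.mul (tiltW_cont m))).intervalIntegrable _ _)
      ((continuous_const.mul (tiltW_cont m)).intervalIntegrable _ _),
    intervalIntegral.integral_const_mul, intervalIntegral.integral_const_mul]
  rfl

lemma outer_base_neg (l m : ℝ) :
    (∫ y in (-1:ℝ)..1, (y ^ 2 * tiltZ l - tiltI l) * tiltW m (-y))
      = tiltZ l * tiltI m - tiltI l * tiltZ m := by
  have h : ∀ y : ℝ, (y ^ 2 * tiltZ l - tiltI l) * tiltW m (-y)
      = tiltZ l * (y ^ 2 * tiltW m (-y)) - tiltI l * tiltW m (-y) := fun y => by ring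
  simp_rw [h]
  rw [intervalIntegral.integral_sub (f := fun y => tiltZ l * (y ^ 2 * tiltW m (-y))) (g := fun y => tiltI l * tiltW m (-y))
      ((continuous_const.mul (continuous_pow 2 |>.mul (tiltW_neg_cont m))).intervalIntegrable _ _)
      ((continuous_const.mul (tiltW_neg_cont m)).intervalIntegrable _ _),
    intervalIntegral.integral_const_mul, intervalIntegral.integral_const_mul, intW_neg, intI_neg]

lemma exp_factor_nonneg {c : ℝ} (hc : 0 ≤ c) (t : ℝ) :
    0 ≤ t * (Real.exp (c * t) - Real.exp (-(c * t))) := by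
  rcases le_total 0 t with h | h
  · exact mul_nonneg h (sub_nonneg.mpr (Real.exp_le_exp.mpr (by nlinarith)))
  · have h2 : Real.exp (c * t) - Real.exp (-(c * t)) ≤ 0 :=
      sub_nonpos.mpr (Real.exp_le_exp.mpr (by nlinarith))
    nlinarith

lemma exp_factor_pos {c t : ℝ} (hc : 0 < c) (ht : 0 < t) :
    0 < t * (Real.exp (c * t) - Real.exp (-(c * t))) :=
  mul_pos ht (sub_pos.mpr (Real.exp_lt_exp.mpr (by nlinarith)))

lemma S_eq (l₁ l₂ x y : ℝ) :
    (tiltW l₂ y * ((y ^ 2 - x ^ 2) * tiltW l₁ x)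
        - tiltW l₁ y * ((y ^ 2 - x ^ 2) * tiltW l₂ x))
      + (tiltW l₂ (-y) * ((y ^ 2 - x ^ 2) * tiltW l₁ (-x))
        - tiltW l₁ (-y) * ((y ^ 2 - x ^ 2) * tiltW l₂ (-x)))
    = ((x - y) * (Real.exp ((l₂ - l₁) / 2 * (x - y)) - Real.exp (-((l₂ - l₁) / 2 * (x - y)))))
      * ((x + y) * (Real.exp ((l₁ + l₂) / 2 * (x + y)) - Real.exp (-((l₁ + l₂) / 2 * (x + y)))))
      * (Real.sqrt (1 - x ^ 2) * Real.sqrt (1 - y ^ 2)) := by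
  have key : ∀ c d e f : ℝ, c + d = e + f →
      Real.exp c * Real.exp d = Real.exp e * Real.exp f := by
    intro c d e f h
    rw [← Real.exp_add, ← Real.exp_add, h]
  have e1 : Real.exp (l₁ * x) * Real.exp (l₂ * y)
      = Real.exp ((l₁ + l₂) / 2 * (x + y)) * Real.exp (-((l₂ - l₁) / 2 * (x - y))) :=
    key _ _ _ _ (by ring)
  have e2 : Real.exp (l₂ * x) * Real.exp (l₁ * y)
      = Real.exp ((l₁ + l₂) / 2 * (x + y)) * Real.exp ((l₂ - l₁) / 2 * (x - y)) :=
    key _ _ _ _ (by ring)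
  have e3 : Real.exp (l₁ * -x) * Real.exp (l₂ * -y)
      = Real.exp (-((l₁ + l₂) / 2 * (x + y))) * Real.exp ((l₂ - l₁) / 2 * (x - y)) :=
    key _ _ _ _ (by ring)
  have e4 : Real.exp (l₂ * -x) * Real.exp (l₁ * -y)
      = Real.exp (-((l₁ + l₂) / 2 * (x + y))) * Real.exp (-((l₂ - l₁) / 2 * (x - y))) :=
    key _ _ _ _ (by ring)
  simp only [tiltW, neg_pow, Even.neg_pow even_two]
  linear_combination (Real.sqrt (1 - x ^ 2) * Real.sqrt (1 - y ^ 2) * (y ^ 2 - x ^ 2))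
    * (e1 - e2 + e3 - e4)

noncomputable def tiltPhi (l₁ l₂ y : ℝ) : ℝ :=
  ((y ^ 2 * tiltZ l₁ - tiltI l₁) * tiltW l₂ y + (y ^ 2 * tiltZ l₁ - tiltI l₁) * tiltW l₂ (-y))
  - ((y ^ 2 * tiltZ l₂ - tiltI l₂) * tiltW l₁ y + (y ^ 2 * tiltZ l₂ - tiltI l₂) * tiltW l₁ (-y))

lemma tiltPhi_cont (l₁ l₂ : ℝ) : Continuous (tiltPhi l₁ l₂) := by
  unfold tiltPhi tiltW; fun_prop

lemma tiltPhi_eq_inner (l₁ l₂ y : ℝ) :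
    tiltPhi l₁ l₂ y = ∫ x in (-1:ℝ)..1,
      ((tiltW l₂ y * ((y ^ 2 - x ^ 2) * tiltW l₁ x)
          - tiltW l₁ y * ((y ^ 2 - x ^ 2) * tiltW l₂ x))
        + (tiltW l₂ (-y) * ((y ^ 2 - x ^ 2) * tiltW l₁ (-x))
          - tiltW l₁ (-y) * ((y ^ 2 - x ^ 2) * tiltW l₂ (-x)))) := by
  have c1 : ∀ l : ℝ, Continuous fun x : ℝ => (y ^ 2 - x ^ 2) * tiltW l x :=
    fun l => (continuous_const.sub (continuous_pow 2)).mul (tiltW_cont l)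
  have c2 : ∀ l : ℝ, Continuous fun x : ℝ => (y ^ 2 - x ^ 2) * tiltW l (-x) :=
    fun l => (continuous_const.sub (continuous_pow 2)).mul (tiltW_neg_cont l)
  rw [intervalIntegral.integral_add
      (f := fun x => tiltW l₂ y * ((y ^ 2 - x ^ 2) * tiltW l₁ x) - tiltW l₁ y * ((y ^ 2 - x ^ 2) * tiltW l₂ x))
      (g := fun x => tiltW l₂ (-y) * ((y ^ 2 - x ^ 2) * tiltW l₁ (-x)) - tiltW l₁ (-y) * ((y ^ 2 - x ^ 2) * tiltW l₂ (-x)))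
      (((continuous_const.mul (c1 l₁)).sub (continuous_const.mul (c1 l₂))).intervalIntegrable _ _)
      (((continuous_const.mul (c2 l₁)).sub (continuous_const.mul (c2 l₂))).intervalIntegrable _ _),
    intervalIntegral.integral_sub
      (f := fun x => tiltW l₂ y * ((y ^ 2 - x ^ 2) * tiltW l₁ x)) (g := fun x => tiltW l₁ y * ((y ^ 2 - x ^ 2) * tiltW l₂ x))
      ((continuous_const.mul (c1 l₁)).intervalIntegrable _ _)
      ((continuous_const.mul (c1 l₂)).intervalIntegrable _ _),
    intervalIntegral.integral_sub
      (f := fun x => tiltW l₂ (-y) * ((y ^ 2 - x ^ 2) * tiltW l₁ (-x))) (g := fun x => tiltW l₁ (-y) * ((y ^ 2 - x ^ 2) * tiltW l₂ (-x)))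
      ((continuous_const.mul (c2 l₁)).intervalIntegrable _ _)
      ((continuous_const.mul (c2 l₂)).intervalIntegrable _ _),
    intervalIntegral.integral_const_mul, intervalIntegral.integral_const_mul,
    intervalIntegral.integral_const_mul, intervalIntegral.integral_const_mul,
    int_base, int_base, int_base_neg, int_base_neg]
  unfold tiltPhi; ring

lemma tiltPhi_nonneg (l₁ l₂ : ℝ) (h₁ : 0 ≤ l₁) (h₂ : l₁ ≤ l₂) (y : ℝ) :
    0 ≤ tiltPhi l₁ l₂ y := by
  rw [tiltPhi_eq_inner]
  apply intervalIntegral.integral_nonneg (by norm_num)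
  intro x _
  rw [S_eq]
  exact mul_nonneg (mul_nonneg
    (exp_factor_nonneg (by linarith) _) (exp_factor_nonneg (by linarith) _))
    (mul_nonneg (Real.sqrt_nonneg _) (Real.sqrt_nonneg _))

lemma tiltPhi_pos (l₁ l₂ : ℝ) (h₁ : 0 ≤ l₁) (h₂ : l₁ < l₂) {y : ℝ}
    (hy0 : 0 ≤ y) (hy1 : y ≤ 1 / 4) : 0 < tiltPhi l₁ l₂ y := by
  rw [tiltPhi_eq_inner]
  set f : ℝ → ℝ := fun x =>
      ((tiltW l₂ y * ((y ^ 2 - x ^ 2) * tiltW l₁ x)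
          - tiltW l₁ y * ((y ^ 2 - x ^ 2) * tiltW l₂ x))
        + (tiltW l₂ (-y) * ((y ^ 2 - x ^ 2) * tiltW l₁ (-x))
          - tiltW l₁ (-y) * ((y ^ 2 - x ^ 2) * tiltW l₂ (-x)))) with hf
  have cf : Continuous f := by
    unfold f; unfold tiltW; fun_prop
  have hnn : ∀ x : ℝ, 0 ≤ f x := by
    intro x
    rw [hf]; simp only []
    rw [S_eq]
    exact mul_nonneg (mul_nonneg
      (exp_factor_nonneg (by linarith) _) (exp_factor_nonneg (by linarith) _))
      (mul_nonneg (Real.sqrt_nonneg _) (Real.sqrt_nonneg _))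
  have hsplit1 : (∫ x in (1/2:ℝ)..(3/4), f x) + ∫ x in (3/4:ℝ)..1, f x
      = ∫ x in (1/2:ℝ)..1, f x :=
    intervalIntegral.integral_add_adjacent_intervals
      (cf.intervalIntegrable _ _) (cf.intervalIntegrable _ _)
  have hsplit2 : (∫ x in (-1:ℝ)..(1/2), f x) + ∫ x in (1/2:ℝ)..1, f x
      = ∫ x in (-1:ℝ)..1, f x :=
    intervalIntegral.integral_add_adjacent_intervals
      (cf.intervalIntegrable _ _) (cf.intervalIntegrable _ _)
  have hmid : 0 < ∫ x in (1/2:ℝ)..(3/4), f x := by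
    apply intervalIntegral_pos_of_pos_on (cf.intervalIntegrable _ _) _ (by norm_num)
    intro x hx
    obtain ⟨hx1, hx2⟩ := hx
    rw [hf]; simp only []
    rw [S_eq]
    apply mul_pos (mul_pos
      (exp_factor_pos (by linarith) (by linarith))
      (exp_factor_pos (by linarith) (by linarith)))
    exact mul_pos (Real.sqrt_pos.mpr (by nlinarith)) (Real.sqrt_pos.mpr (by nlinarith))
  have hleft : 0 ≤ ∫ x in (-1:ℝ)..(1/2), f x :=
    intervalIntegral.integral_nonneg (by norm_num) (fun u _ => hnn u)
  have hright : 0 ≤ ∫ x in (3/4:ℝ)..1, f x :=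
    intervalIntegral.integral_nonneg (by norm_num) (fun u _ => hnn u)
  linarith [hsplit1, hsplit2]

lemma tilt_key (l₁ l₂ : ℝ) (h₁ : 0 ≤ l₁) (h₂ : l₁ < l₂) :
    tiltI l₁ * tiltZ l₂ < tiltI l₂ * tiltZ l₁ := by
  have cφ : Continuous (tiltPhi l₁ l₂) := tiltPhi_cont l₁ l₂
  have hout : (∫ y in (-1:ℝ)..1, tiltPhi l₁ l₂ y)
      = 4 * (tiltZ l₁ * tiltI l₂ - tiltI l₁ * tiltZ l₂) := by
    unfold tiltPhi
    have c1 : ∀ l m : ℝ, Continuous fun y : ℝ => (y ^ 2 * tiltZ l - tiltI l) * tiltW m y :=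
      fun l m => (((continuous_pow 2).mul continuous_const).sub continuous_const).mul (tiltW_cont m)
    have c2 : ∀ l m : ℝ, Continuous fun y : ℝ => (y ^ 2 * tiltZ l - tiltI l) * tiltW m (-y) :=
      fun l m => (((continuous_pow 2).mul continuous_const).sub continuous_const).mul (tiltW_neg_cont m)
    rw [intervalIntegral.integral_sub
        (f := fun y => (y ^ 2 * tiltZ l₁ - tiltI l₁) * tiltW l₂ y + (y ^ 2 * tiltZ l₁ - tiltI l₁) * tiltW l₂ (-y))
        (g := fun y => (y ^ 2 * tiltZ l₂ - tiltI l₂) * tiltW l₁ y + (y ^ 2 * tiltZ l₂ - tiltI l₂) * tiltW l₁ (-y))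
        (((c1 l₁ l₂).add (c2 l₁ l₂)).intervalIntegrable _ _)
        (((c1 l₂ l₁).add (c2 l₂ l₁)).intervalIntegrable _ _),
      intervalIntegral.integral_add (f := fun y => (y ^ 2 * tiltZ l₁ - tiltI l₁) * tiltW l₂ y)
        (g := fun y => (y ^ 2 * tiltZ l₁ - tiltI l₁) * tiltW l₂ (-y)) ((c1 l₁ l₂).intervalIntegrable _ _)
        ((c2 l₁ l₂).intervalIntegrable _ _),
      intervalIntegral.integral_add (f := fun y => (y ^ 2 * tiltZ l₂ - tiltI l₂) * tiltW l₁ y)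
        (g := fun y => (y ^ 2 * tiltZ l₂ - tiltI l₂) * tiltW l₁ (-y)) ((c1 l₂ l₁).intervalIntegrable _ _)
        ((c2 l₂ l₁).intervalIntegrable _ _),
      outer_base, outer_base, outer_base_neg, outer_base_neg]
    ring
  have hsplit1 : (∫ y in (0:ℝ)..(1/4), tiltPhi l₁ l₂ y) + ∫ y in (1/4:ℝ)..1, tiltPhi l₁ l₂ y
      = ∫ y in (0:ℝ)..1, tiltPhi l₁ l₂ y :=
    intervalIntegral.integral_add_adjacent_intervals
      (cφ.intervalIntegrable _ _) (cφ.intervalIntegrable _ _)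
  have hsplit2 : (∫ y in (-1:ℝ)..(0:ℝ), tiltPhi l₁ l₂ y) + ∫ y in (0:ℝ)..1, tiltPhi l₁ l₂ y
      = ∫ y in (-1:ℝ)..1, tiltPhi l₁ l₂ y :=
    intervalIntegral.integral_add_adjacent_intervals
      (cφ.intervalIntegrable _ _) (cφ.intervalIntegrable _ _)
  have hmid : 0 < ∫ y in (0:ℝ)..(1/4), tiltPhi l₁ l₂ y := by
    apply intervalIntegral_pos_of_pos_on (cφ.intervalIntegrable _ _) _ (by norm_num)
    intro y hy
    exact tiltPhi_pos l₁ l₂ h₁ h₂ hy.1.le hy.2.le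
  have hleft : 0 ≤ ∫ y in (-1:ℝ)..(0:ℝ), tiltPhi l₁ l₂ y :=
    intervalIntegral.integral_nonneg (by norm_num)
      (fun u _ => tiltPhi_nonneg l₁ l₂ h₁ h₂.le u)
  have hright : 0 ≤ ∫ y in (1/4:ℝ)..1, tiltPhi l₁ l₂ y :=
    intervalIntegral.integral_nonneg (by norm_num)
      (fun u _ => tiltPhi_nonneg l₁ l₂ h₁ h₂.le u)
  nlinarith [hsplit1, hsplit2, hout, hmid, hleft, hright]


/-- Equivalent form of Theorem B: the second moment of the tilted Wigner
semicircle is strictly increasing in the tilt on the nonnegative half-line. -/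
theorem tiltE_xsq_strictMono (lam₁ lam₂ : ℝ) (h₁ : 0 ≤ lam₁) (h₂ : lam₁ < lam₂) :
    tiltE lam₁ (fun x => x ^ 2) < tiltE lam₂ (fun x => x ^ 2) := by
  have key := tilt_key lam₁ lam₂ h₁ h₂
  unfold tiltE
  have hI : ∀ l : ℝ, (∫ x in (-1 : ℝ)..1, (fun x : ℝ => x ^ 2) x * tiltW l x) = tiltI l :=
    fun l => rfl
  rw [hI, hI, inv_mul_eq_div, inv_mul_eq_div,
    div_lt_div_iff₀ (tiltZ_pos lam₁) (tiltZ_pos lam₂)]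
  linarith
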